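/- Fix positive integers n, d, L and reals ρ ≥ 0, β ≥ 0. There exists a constant C ≥ 0, depending only on ρ, β, n, d, L, such that the following holds. Let σ : ℝ → ℝ be ρ-Lipschitz with σ(0) = 0; let σ' : ℝ → ℝ satisfy |σ'(x)| ≤ β for all x and be ρ-Lipschitz; let Φ map n×d matrices to n×d matrices with ‖Φ(Z₁) − Φ(Z₂)‖ ≤ ρ·‖Z₁ − Z₂‖ and ‖Φ(Z)‖ ≤ β for all Z, Z₁, Z₂. Let A, A_SG be n×n matrices with ‖A‖ ≤ β, ‖A_SG‖ ≤ β, let X be an n×d matrix with ‖X‖ ≤ β, and let W^(0), …, W^(L−1) be d×d matrices with ‖W^(l)‖ ≤ β. Run the GCN forward recursion with σ to get H^(l), Z^(l) (resp. H_SG^(l), Z_SG^(l) using A_SG), and the backward recursion with σ' and terminal gradients G^(L) = Φ(Z^(L)), G_SG^(L) = Φ(Z_SG^(L)), obtaining G^(l), G_SG^(l). Then the weight gradients satisfy ‖(A_SG·H_SG^(l))ᵀ·G_SG^(l+1) − (A·H^(l))ᵀ·G^(l+1)‖ ≤ C·‖A_SG − A‖ for all 0 ≤ l ≤ L−1. 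-/
import Mathlib


open Matrix

attribute [local instance] Matrix.normedAddCommGroup

/-- The activations of the GCN forward recursion: `gcnH A X W σ 0 = X` and
`gcnH A X W σ (l+1) = σ(A * gcnH A X W σ l * W l)` entrywise. -/
noncomputable def gcnH {n d : ℕ} (A : Matrix (Fin n) (Fin n) ℝ)
    (X : Matrix (Fin n) (Fin d) ℝ) (W : ℕ → Matrix (Fin d) (Fin d) ℝ)
    (σ : ℝ → ℝ) : ℕ → Matrix (Fin n) (Fin d) ℝ
  | 0 => X
  | l + 1 => (A * gcnH A X W σ l * W l).map σ

/-- The pre-activations of the GCN forward recursion: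
`gcnZ A X W σ (l+1) = A * gcnH A X W σ l * W l` (the value at index 0 is junk). -/
noncomputable def gcnZ {n d : ℕ} (A : Matrix (Fin n) (Fin n) ℝ)
    (X : Matrix (Fin n) (Fin d) ℝ) (W : ℕ → Matrix (Fin d) (Fin d) ℝ)
    (σ : ℝ → ℝ) : ℕ → Matrix (Fin n) (Fin d) ℝ
  | 0 => 0
  | l + 1 => A * gcnH A X W σ l * W l

/-- Lemma 2: error bound for the weight gradients of a multi-layer GCN. There
is a constant `C`, depending only on ρ, β, n, d, L, such that the weight
gradients `(A·H^(l))ᵀ·G^(l+1)` of the SG estimator (forward and backward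
recursions with `A_SG` in place of `A`, terminal gradients `Φ(Z^(L))` resp.
`Φ(Z_SG^(L))`) satisfy
`‖(A_SG·H_SG^(l))ᵀ·G_SG^(l+1) - (A·H^(l))ᵀ·G^(l+1)‖ ≤ C * ‖A_SG - A‖`
for all `0 ≤ l ≤ L - 1`. -/
lemma mnorm_mul_le {a b c : ℕ} (A : Matrix (Fin a) (Fin b) ℝ) (B : Matrix (Fin b) (Fin c) ℝ) :
    ‖A * B‖ ≤ (b : ℝ) * ‖A‖ * ‖B‖ := by
  rw [Matrix.norm_le_iff (by positivity)]
  intro i j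
  rw [Matrix.mul_apply]
  calc ‖∑ k, A i k * B k j‖ ≤ ∑ k, ‖A i k * B k j‖ := norm_sum_le _ _
    _ ≤ ∑ _k : Fin b, ‖A‖ * ‖B‖ := by
        refine Finset.sum_le_sum fun k _ => ?_
        rw [norm_mul]
        exact mul_le_mul (Matrix.norm_entry_le_entrywise_sup_norm A)
          (Matrix.norm_entry_le_entrywise_sup_norm B) (norm_nonneg _) (norm_nonneg _)
    _ = (b : ℝ) * ‖A‖ * ‖B‖ := by simp [Finset.sum_const]; ring

lemma mnorm_hadamard_le {a b : ℕ} (A B : Matrix (Fin a) (Fin b) ℝ) :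
    ‖Matrix.hadamard A B‖ ≤ ‖A‖ * ‖B‖ := by
  rw [Matrix.norm_le_iff (by positivity)]
  intro i j
  rw [Matrix.hadamard_apply, norm_mul]
  exact mul_le_mul (Matrix.norm_entry_le_entrywise_sup_norm A)
    (Matrix.norm_entry_le_entrywise_sup_norm B) (norm_nonneg _) (norm_nonneg _)

lemma mnorm_transpose {a b : ℕ} (A : Matrix (Fin a) (Fin b) ℝ) : ‖Aᵀ‖ = ‖A‖ := by
  refine le_antisymm ((Matrix.norm_le_iff (norm_nonneg _)).2 fun i j => ?_)
    ((Matrix.norm_le_iff (norm_nonneg _)).2 fun i j => ?_)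
  · exact Matrix.norm_entry_le_entrywise_sup_norm (A := A) (i := j) (j := i)
  · exact Matrix.norm_entry_le_entrywise_sup_norm (A := Aᵀ) (i := j) (j := i)

lemma mnorm_map_sub_le {a b : ℕ} {ρ : ℝ} (hρ : 0 ≤ ρ) {σ : ℝ → ℝ}
    (hσ : ∀ x y : ℝ, |σ x - σ y| ≤ ρ * |x - y|) (A B : Matrix (Fin a) (Fin b) ℝ) :
    ‖A.map σ - B.map σ‖ ≤ ρ * ‖A - B‖ := by
  rw [Matrix.norm_le_iff (by positivity)]
  intro i j
  have h1 : (A.map σ - B.map σ) i j = σ (A i j) - σ (B i j) := by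
    simp [Matrix.map_apply]
  rw [h1, Real.norm_eq_abs]
  calc |σ (A i j) - σ (B i j)| ≤ ρ * |A i j - B i j| := hσ _ _
    _ ≤ ρ * ‖A - B‖ := by
        have h2 : |A i j - B i j| = ‖(A - B) i j‖ := by simp [Real.norm_eq_abs]
        rw [h2]
        exact mul_le_mul_of_nonneg_left (Matrix.norm_entry_le_entrywise_sup_norm _) hρ

lemma mnorm_map_le {a b : ℕ} {β : ℝ} {σ' : ℝ → ℝ} (hβ : 0 ≤ β)
    (hσ' : ∀ x : ℝ, |σ' x| ≤ β) (A : Matrix (Fin a) (Fin b) ℝ) :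
    ‖A.map σ'‖ ≤ β := by
  rw [Matrix.norm_le_iff hβ]
  intro i j
  simpa [Matrix.map_apply, Real.norm_eq_abs] using hσ' (A i j)

lemma mnorm_map_le' {a b : ℕ} {ρ : ℝ} (hρ : 0 ≤ ρ) {σ : ℝ → ℝ}
    (hσ : ∀ x y : ℝ, |σ x - σ y| ≤ ρ * |x - y|) (h0 : σ 0 = 0)
    (A : Matrix (Fin a) (Fin b) ℝ) : ‖A.map σ‖ ≤ ρ * ‖A‖ := by
  have h := mnorm_map_sub_le hρ hσ A 0
  have hz : (0 : Matrix (Fin a) (Fin b) ℝ).map σ = 0 := by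
    ext i j; simp [Matrix.map_apply, h0]
  rw [hz, sub_zero, sub_zero] at h
  exact h

lemma mul_sub_decomp {a b c : ℕ} (A B : Matrix (Fin a) (Fin b) ℝ)
    (C E : Matrix (Fin b) (Fin c) ℝ) : A * C - B * E = (A - B) * C + B * (C - E) := by
  rw [Matrix.sub_mul, Matrix.mul_sub]; abel

lemma hadamard_sub_decomp {a b : ℕ} (A B C E : Matrix (Fin a) (Fin b) ℝ) :
    Matrix.hadamard A C - Matrix.hadamard B E
      = Matrix.hadamard (A - B) C + Matrix.hadamard B (C - E) := by
  ext i j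
  simp [Matrix.hadamard_apply, Matrix.sub_apply, Matrix.add_apply]
  ring

lemma mul2_le {x1 x2 y1 y2 : ℝ} (h1 : x1 ≤ y1) (h2 : x2 ≤ y2) (hx1 : 0 ≤ x1)
    (hx2 : 0 ≤ x2) : x1 * x2 ≤ y1 * y2 :=
  mul_le_mul h1 h2 hx2 (hx1.trans h1)

lemma mul3_le {x1 x2 x3 y1 y2 y3 : ℝ} (h1 : x1 ≤ y1) (h2 : x2 ≤ y2) (h3 : x3 ≤ y3)
    (hx1 : 0 ≤ x1) (hx2 : 0 ≤ x2) (hx3 : 0 ≤ x3) : x1 * x2 * x3 ≤ y1 * y2 * y3 := by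
  have hy1 := hx1.trans h1
  have hy2 := hx2.trans h2
  exact mul_le_mul (mul_le_mul h1 h2 hx2 hy1) h3 hx3 (mul_nonneg hy1 hy2)

set_option maxHeartbeats 3000000 in
theorem gcn_gradW_error_bounded {n d L : ℕ} (hn : 0 < n) (hd : 0 < d) (hL : 0 < L)
    {ρ β : ℝ} (hρ : 0 ≤ ρ) (hβ : 0 ≤ β) :
    ∃ C : ℝ, 0 ≤ C ∧
      ∀ (σ : ℝ → ℝ), (∀ x y : ℝ, |σ x - σ y| ≤ ρ * |x - y|) → σ 0 = 0 →
      ∀ (σ' : ℝ → ℝ), (∀ x : ℝ, |σ' x| ≤ β) →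
        (∀ x y : ℝ, |σ' x - σ' y| ≤ ρ * |x - y|) →
      ∀ (Φ : Matrix (Fin n) (Fin d) ℝ → Matrix (Fin n) (Fin d) ℝ),
        (∀ Z₁ Z₂, ‖Φ Z₁ - Φ Z₂‖ ≤ ρ * ‖Z₁ - Z₂‖) → (∀ Z, ‖Φ Z‖ ≤ β) →
      ∀ (A ASG : Matrix (Fin n) (Fin n) ℝ), ‖A‖ ≤ β → ‖ASG‖ ≤ β →
      ∀ (X : Matrix (Fin n) (Fin d) ℝ), ‖X‖ ≤ β →
      ∀ (W : ℕ → Matrix (Fin d) (Fin d) ℝ), (∀ l, l < L → ‖W l‖ ≤ β) →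
      ∀ (G GSG : ℕ → Matrix (Fin n) (Fin d) ℝ),
        G L = Φ (gcnZ A X W σ L) →
        GSG L = Φ (gcnZ ASG X W σ L) →
        (∀ l, 1 ≤ l → l < L →
          G l = Matrix.hadamard ((gcnZ A X W σ l).map σ')
            (Aᵀ * G (l + 1) * (W l)ᵀ)) →
        (∀ l, 1 ≤ l → l < L →
          GSG l = Matrix.hadamard ((gcnZ ASG X W σ l).map σ')
            (ASGᵀ * GSG (l + 1) * (W l)ᵀ)) →
      ∀ l, l < L →
        ‖(ASG * gcnH ASG X W σ l)ᵀ * GSG (l + 1) -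
            (A * gcnH A X W σ l)ᵀ * G (l + 1)‖ ≤ C * ‖ASG - A‖ := by
  classical
  obtain ⟨P, hPdef⟩ : ∃ P : ℝ, P = (ρ + 1) * (β + 1) * ((n : ℝ) + 1) * ((d : ℝ) + 1) :=
    ⟨_, rfl⟩
  have hn0 : (0:ℝ) ≤ (n:ℝ) := Nat.cast_nonneg n
  have hd0 : (0:ℝ) ≤ (d:ℝ) := Nat.cast_nonneg d
  have hL0 : (0:ℝ) ≤ (L:ℝ) := Nat.cast_nonneg L
  have key : ∀ a b c e : ℝ, 1 ≤ a → 1 ≤ b → 1 ≤ c → 1 ≤ e → a ≤ a * b * c * e := by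
    intro a b c e ha hb hc he
    have h0a : (0:ℝ) ≤ a := by linarith
    have h1 : a ≤ a * b := le_mul_of_one_le_right h0a hb
    have h2 : a * b ≤ a * b * c := le_mul_of_one_le_right (by nlinarith) hc
    have h3 : a * b * c ≤ a * b * c * e := le_mul_of_one_le_right (by nlinarith) he
    linarith
  have hρP : ρ ≤ P := by
    have h := key (ρ + 1) (β + 1) ((n:ℝ) + 1) ((d:ℝ) + 1) (by linarith) (by linarith)
      (by linarith) (by linarith)
    rw [hPdef]; linarith
  have hβP : β ≤ P := by
    have h := key (β + 1) (ρ + 1) ((n:ℝ) + 1) ((d:ℝ) + 1) (by linarith) (by linarith)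
      (by linarith) (by linarith)
    have e : (β + 1) * (ρ + 1) * ((n:ℝ) + 1) * ((d:ℝ) + 1) = P := by rw [hPdef]; ring
    linarith
  have hnP : (n:ℝ) ≤ P := by
    have h := key ((n:ℝ) + 1) (ρ + 1) (β + 1) ((d:ℝ) + 1) (by linarith) (by linarith)
      (by linarith) (by linarith)
    have e : ((n:ℝ) + 1) * (ρ + 1) * (β + 1) * ((d:ℝ) + 1) = P := by rw [hPdef]; ring
    linarith
  have hdP : (d:ℝ) ≤ P := by
    have h := key ((d:ℝ) + 1) (ρ + 1) (β + 1) ((n:ℝ) + 1) (by linarith) (by linarith)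
      (by linarith) (by linarith)
    have e : ((d:ℝ) + 1) * (ρ + 1) * (β + 1) * ((n:ℝ) + 1) = P := by rw [hPdef]; ring
    linarith
  have hP1 : (1:ℝ) ≤ P := by
    have h := key ((1:ℝ)) (ρ + 1) (β + 1) ((n:ℝ) + 1) le_rfl (by linarith)
      (by linarith) (by linarith)
    have e : (1:ℝ) * (ρ + 1) * (β + 1) * ((n:ℝ) + 1) = (ρ + 1) * (β + 1) * ((n:ℝ) + 1) := by
      ring
    rw [e] at h
    have h2 : (ρ + 1) * (β + 1) * ((n:ℝ) + 1) ≤ P := by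
      rw [hPdef]
      have hnn : (0:ℝ) ≤ (ρ + 1) * (β + 1) * ((n:ℝ) + 1) := by positivity
      nlinarith
    linarith
  have hP0 : (0:ℝ) ≤ P := by linarith
  have hpow : ∀ s t : ℕ, s ≤ t → P ^ s ≤ P ^ t := fun s t h => pow_le_pow_right₀ hP1 h
  have hppos : ∀ s : ℕ, (0:ℝ) ≤ P ^ s := fun s => pow_nonneg hP0 s
  have hpone : ∀ s : ℕ, (1:ℝ) ≤ P ^ s := fun s => one_le_pow₀ hP1
  refine ⟨2 * ((L:ℝ) + 1) ^ 2 * P ^ (21 * L + 10),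
    mul_nonneg (by positivity) (hppos _), ?_⟩
  intro σ hσ hσ0 σ' hσ'b hσ'l Φ hΦl hΦb A ASG hA hASG X hX W hW G GSG hGL hGSGL hGr hGSGr
  obtain ⟨δ, hδdef⟩ : ∃ x : ℝ, x = ‖ASG - A‖ := ⟨_, rfl⟩
  have hδ0 : (0:ℝ) ≤ δ := hδdef ▸ norm_nonneg _
  have hAP : ‖A‖ ≤ P := hA.trans hβP
  have hASGP : ‖ASG‖ ≤ P := hASG.trans hβP
  have hATP : ‖Aᵀ‖ ≤ P := by rw [mnorm_transpose]; exact hAP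
  have hASGTP : ‖ASGᵀ‖ ≤ P := by rw [mnorm_transpose]; exact hASGP
  -- forward norm bound
  have hHb : ∀ (B : Matrix (Fin n) (Fin n) ℝ), ‖B‖ ≤ β → ∀ m, m ≤ L →
      ‖gcnH B X W σ m‖ ≤ P ^ (5 * m + 1) := by
    intro B hB m
    induction m with
    | zero =>
      intro _
      calc ‖gcnH B X W σ 0‖ = ‖X‖ := rfl
        _ ≤ P := hX.trans hβP
        _ = P ^ (5 * 0 + 1) := (pow_one P).symm
    | succ m ih =>
      intro hm1
      have hWm : ‖W m‖ ≤ P := (hW m (by omega)).trans hβP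
      have hHm := ih (by omega)
      have hBP : ‖B‖ ≤ P := hB.trans hβP
      have hstep : gcnH B X W σ (m + 1) = (B * gcnH B X W σ m * W m).map σ := rfl
      rw [hstep]
      refine (mnorm_map_le' hρ hσ hσ0 _).trans ?_
      refine le_trans (mul2_le hρP ((mnorm_mul_le _ _).trans
        (mul3_le hdP ((mnorm_mul_le _ _).trans
          (mul3_le hnP hBP hHm hn0 (norm_nonneg _) (norm_nonneg _))) hWm
          hd0 (norm_nonneg _) (norm_nonneg _))) hρ (norm_nonneg _)) ?_
      have e : 5 * (m + 1) + 1 = 5 * m + 6 := by ring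
      rw [e]
      exact le_of_eq (by ring)
  -- forward difference bound
  have hD : ∀ m, m ≤ L →
      ‖gcnZ ASG X W σ m - gcnZ A X W σ m‖ ≤ (m:ℝ) * P ^ (6 * m) * δ ∧
      ‖gcnH ASG X W σ m - gcnH A X W σ m‖ ≤ (m:ℝ) * P ^ (6 * m + 1) * δ := by
    intro m
    induction m with
    | zero =>
      intro _
      constructor
      · have h0 : gcnZ ASG X W σ 0 - gcnZ A X W σ 0 = 0 := by simp [gcnZ]
        rw [h0, norm_zero]
        simp
      · have h0 : gcnH ASG X W σ 0 - gcnH A X W σ 0 = 0 := by simp [gcnH]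
        rw [h0, norm_zero]
        simp
    | succ m ih =>
      intro hm1
      obtain ⟨ihZ, ihH⟩ := ih (by omega)
      have hHSn : ‖gcnH ASG X W σ m‖ ≤ P ^ (5 * m + 1) := hHb ASG hASG m (by omega)
      have hWm : ‖W m‖ ≤ P := (hW m (by omega)).trans hβP
      have hm0 : (0:ℝ) ≤ (m:ℝ) := Nat.cast_nonneg m
      have hZeq : gcnZ ASG X W σ (m + 1) - gcnZ A X W σ (m + 1)
          = ((ASG - A) * gcnH ASG X W σ m
              + A * (gcnH ASG X W σ m - gcnH A X W σ m)) * W m := by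
        simp only [gcnZ]
        rw [← Matrix.sub_mul, mul_sub_decomp]
      have hsum : ‖(ASG - A) * gcnH ASG X W σ m
            + A * (gcnH ASG X W σ m - gcnH A X W σ m)‖
          ≤ P * δ * P ^ (5 * m + 1) + P * P * ((m:ℝ) * P ^ (6 * m + 1) * δ) := by
        refine (norm_add_le _ _).trans (add_le_add
          ((mnorm_mul_le _ _).trans ?_) ((mnorm_mul_le _ _).trans ?_))
        · exact mul3_le hnP hδdef.ge hHSn hn0 (norm_nonneg _) (norm_nonneg _)
        · exact mul3_le hnP hAP ihH hn0 (norm_nonneg _) (norm_nonneg _)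
      have hZd : ‖gcnZ ASG X W σ (m + 1) - gcnZ A X W σ (m + 1)‖
          ≤ (↑(m + 1) : ℝ) * P ^ (6 * (m + 1)) * δ := by
        rw [hZeq]
        refine (mnorm_mul_le _ _).trans (le_trans
          (mul3_le hdP hsum hWm hd0 (norm_nonneg _) (norm_nonneg _)) ?_)
        have e6 : 6 * (m + 1) = 6 * m + 6 := by ring
        rw [e6]
        push_cast
        have heq : P * (P * δ * P ^ (5 * m + 1) + P * P * ((m:ℝ) * P ^ (6 * m + 1) * δ)) * P
            = P ^ (5 * m + 4) * δ + (m:ℝ) * P ^ (6 * m + 5) * δ := by ring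
        rw [heq]
        have c1 := hpow (5 * m + 4) (6 * m + 6) (by omega)
        have c2 := hpow (6 * m + 5) (6 * m + 6) (by omega)
        nlinarith [mul_le_mul_of_nonneg_right c1 hδ0,
          mul_le_mul_of_nonneg_right (mul_le_mul_of_nonneg_left c2 hm0) hδ0,
          mul_nonneg (hppos (6 * m + 6)) hδ0]
      refine ⟨hZd, ?_⟩
      have hHeq : gcnH ASG X W σ (m + 1) - gcnH A X W σ (m + 1)
          = (gcnZ ASG X W σ (m + 1)).map σ - (gcnZ A X W σ (m + 1)).map σ := by
        simp only [gcnH, gcnZ]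
      calc ‖gcnH ASG X W σ (m + 1) - gcnH A X W σ (m + 1)‖
          = ‖(gcnZ ASG X W σ (m + 1)).map σ - (gcnZ A X W σ (m + 1)).map σ‖ := by
            rw [hHeq]
        _ ≤ ρ * ‖gcnZ ASG X W σ (m + 1) - gcnZ A X W σ (m + 1)‖ :=
            mnorm_map_sub_le hρ hσ _ _
        _ ≤ P * ((↑(m + 1) : ℝ) * P ^ (6 * (m + 1)) * δ) :=
            mul2_le hρP hZd hρ (norm_nonneg _)
        _ = (↑(m + 1) : ℝ) * P ^ (6 * (m + 1) + 1) * δ := by push_cast; ring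
  -- backward norm bound
  have hGnorm : ∀ k, k ≤ L - 1 →
      ‖G (L - k)‖ ≤ P ^ (5 * k + 1) ∧ ‖GSG (L - k)‖ ≤ P ^ (5 * k + 1) := by
    intro k
    induction k with
    | zero =>
      intro _
      simp only [Nat.sub_zero]
      constructor
      · rw [hGL]
        calc ‖Φ (gcnZ A X W σ L)‖ ≤ β := hΦb _
          _ ≤ P := hβP
          _ = P ^ (5 * 0 + 1) := (pow_one P).symm
      · rw [hGSGL]
        calc ‖Φ (gcnZ ASG X W σ L)‖ ≤ β := hΦb _
          _ ≤ P := hβP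
          _ = P ^ (5 * 0 + 1) := (pow_one P).symm
    | succ k ih =>
      intro hk1
      obtain ⟨ih1, ih2⟩ := ih (by omega)
      have hl1 : 1 ≤ L - (k + 1) := by omega
      have hlL : L - (k + 1) < L := by omega
      have hsucc : L - (k + 1) + 1 = L - k := by omega
      have hWT : ‖(W (L - (k + 1)))ᵀ‖ ≤ P := by
        rw [mnorm_transpose]; exact (hW _ hlL).trans hβP
      have hGeq := hGr _ hl1 hlL
      have hGSGeq := hGSGr _ hl1 hlL
      rw [hsucc] at hGeq hGSGeq
      have e : 5 * (k + 1) + 1 = 5 * k + 6 := by ring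
      constructor
      · rw [hGeq]
        refine (mnorm_hadamard_le _ _).trans (le_trans
          (mul2_le ((mnorm_map_le hβ hσ'b _).trans hβP)
            ((mnorm_mul_le _ _).trans (mul3_le hdP ((mnorm_mul_le _ _).trans
              (mul3_le hnP hATP ih1 hn0 (norm_nonneg _) (norm_nonneg _))) hWT
              hd0 (norm_nonneg _) (norm_nonneg _)))
            (norm_nonneg _) (norm_nonneg _)) ?_)
        rw [e]
        exact le_of_eq (by ring)
      · rw [hGSGeq]
        refine (mnorm_hadamard_le _ _).trans (le_trans
          (mul2_le ((mnorm_map_le hβ hσ'b _).trans hβP)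
            ((mnorm_mul_le _ _).trans (mul3_le hdP ((mnorm_mul_le _ _).trans
              (mul3_le hnP hASGTP ih2 hn0 (norm_nonneg _) (norm_nonneg _))) hWT
              hd0 (norm_nonneg _) (norm_nonneg _)))
            (norm_nonneg _) (norm_nonneg _)) ?_)
        rw [e]
        exact le_of_eq (by ring)
  have hGn' : ∀ m, 1 ≤ m → m ≤ L →
      ‖G m‖ ≤ P ^ (5 * L + 1) ∧ ‖GSG m‖ ≤ P ^ (5 * L + 1) := by
    intro m h1 h2
    obtain ⟨a, b⟩ := hGnorm (L - m) (by omega)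
    have he : L - (L - m) = m := by omega
    rw [he] at a b
    exact ⟨a.trans (hpow _ _ (by omega)), b.trans (hpow _ _ (by omega))⟩
  -- backward difference bound
  have hEG : ∀ k, k ≤ L - 1 → ‖GSG (L - k) - G (L - k)‖
      ≤ ((k:ℝ) + 1) * P ^ (5 * k) * (((L:ℝ) + 1) * P ^ (11 * L + 6)) * δ := by
    intro k
    induction k with
    | zero =>
      intro _
      simp only [Nat.sub_zero]
      rw [hGSGL, hGL]
      refine (hΦl _ _).trans (le_trans
        (mul2_le hρP (hD L le_rfl).1 hρ (norm_nonneg _)) ?_)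
      have heq : P * ((L:ℝ) * P ^ (6 * L) * δ) = (L:ℝ) * P ^ (6 * L + 1) * δ := by ring
      rw [heq]
      push_cast
      have c1 := hpow (6 * L + 1) (11 * L + 6) (by omega)
      nlinarith [mul_le_mul_of_nonneg_right (mul_le_mul_of_nonneg_left c1 hL0) hδ0,
        mul_nonneg (hppos (11 * L + 6)) hδ0]
    | succ k ih =>
      intro hk1
      have ihk := ih (by omega)
      have hl1 : 1 ≤ L - (k + 1) := by omega
      have hlL : L - (k + 1) < L := by omega
      have hsucc : L - (k + 1) + 1 = L - k := by omega
      have hk0 : (0:ℝ) ≤ (k:ℝ) := Nat.cast_nonneg k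
      have hGeq := hGr _ hl1 hlL
      have hGSGeq := hGSGr _ hl1 hlL
      rw [hsucc] at hGeq hGSGeq
      have hWT : ‖(W (L - (k + 1)))ᵀ‖ ≤ P := by
        rw [mnorm_transpose]; exact (hW _ hlL).trans hβP
      have hGSGn : ‖GSG (L - k)‖ ≤ P ^ (5 * L + 1) := (hGn' (L - k) (by omega) (by omega)).2
      have hYS : ‖ASGᵀ * GSG (L - k) * (W (L - (k + 1)))ᵀ‖
          ≤ P * (P * P * P ^ (5 * L + 1)) * P :=
        (mnorm_mul_le _ _).trans (mul3_le hdP ((mnorm_mul_le _ _).trans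
          (mul3_le hnP hASGTP hGSGn hn0 (norm_nonneg _) (norm_nonneg _))) hWT
          hd0 (norm_nonneg _) (norm_nonneg _))
      have hmapd' : ‖(gcnZ ASG X W σ (L - (k + 1))).map σ'
            - (gcnZ A X W σ (L - (k + 1))).map σ'‖
          ≤ P * ((L:ℝ) * P ^ (6 * L) * δ) := by
        refine (mnorm_map_sub_le hρ hσ'l _ _).trans (mul2_le hρP ?_ hρ (norm_nonneg _))
        refine ((hD _ (by omega)).1).trans ?_
        refine mul_le_mul_of_nonneg_right (mul2_le (Nat.cast_le.2 (by omega))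
          (hpow _ _ (by omega)) (Nat.cast_nonneg _) (hppos _)) hδ0
      have hYdeq : ASGᵀ * GSG (L - k) * (W (L - (k + 1)))ᵀ
            - Aᵀ * G (L - k) * (W (L - (k + 1)))ᵀ
          = ((ASG - A)ᵀ * GSG (L - k) + Aᵀ * (GSG (L - k) - G (L - k)))
              * (W (L - (k + 1)))ᵀ := by
        rw [← Matrix.sub_mul, mul_sub_decomp, Matrix.transpose_sub]
      have hδT : ‖(ASG - A)ᵀ‖ ≤ δ := by rw [mnorm_transpose]; exact hδdef.ge
      have hinner : ‖(ASG - A)ᵀ * GSG (L - k) + Aᵀ * (GSG (L - k) - G (L - k))‖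
          ≤ P * δ * P ^ (5 * L + 1)
            + P * P * (((k:ℝ) + 1) * P ^ (5 * k) * (((L:ℝ) + 1) * P ^ (11 * L + 6)) * δ) := by
        refine (norm_add_le _ _).trans (add_le_add
          ((mnorm_mul_le _ _).trans ?_) ((mnorm_mul_le _ _).trans ?_))
        · exact mul3_le hnP hδT hGSGn hn0 (norm_nonneg _) (norm_nonneg _)
        · exact mul3_le hnP hATP ihk hn0 (norm_nonneg _) (norm_nonneg _)
      have hYd : ‖ASGᵀ * GSG (L - k) * (W (L - (k + 1)))ᵀ
            - Aᵀ * G (L - k) * (W (L - (k + 1)))ᵀ‖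
          ≤ P * (P * δ * P ^ (5 * L + 1)
            + P * P * (((k:ℝ) + 1) * P ^ (5 * k) * (((L:ℝ) + 1) * P ^ (11 * L + 6)) * δ)) * P := by
        rw [hYdeq]
        exact (mnorm_mul_le _ _).trans (mul3_le hdP hinner hWT hd0
          (norm_nonneg _) (norm_nonneg _))
      have hdec : GSG (L - (k + 1)) - G (L - (k + 1))
          = Matrix.hadamard ((gcnZ ASG X W σ (L - (k + 1))).map σ'
                - (gcnZ A X W σ (L - (k + 1))).map σ')
              (ASGᵀ * GSG (L - k) * (W (L - (k + 1)))ᵀ)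
            + Matrix.hadamard ((gcnZ A X W σ (L - (k + 1))).map σ')
              (ASGᵀ * GSG (L - k) * (W (L - (k + 1)))ᵀ
                - Aᵀ * G (L - k) * (W (L - (k + 1)))ᵀ) := by
        rw [hGeq, hGSGeq, hadamard_sub_decomp]
      rw [hdec]
      refine (norm_add_le _ _).trans (le_trans (add_le_add
        ((mnorm_hadamard_le _ _).trans
          (mul2_le hmapd' hYS (norm_nonneg _) (norm_nonneg _)))
        ((mnorm_hadamard_le _ _).trans
          (mul2_le ((mnorm_map_le hβ hσ'b _).trans hβP) hYd
            (norm_nonneg _) (norm_nonneg _)))) ?_)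
      have e5 : 5 * (k + 1) = 5 * k + 5 := by ring
      rw [e5]
      push_cast
      have heq : P * ((L:ℝ) * P ^ (6 * L) * δ) * (P * (P * P * P ^ (5 * L + 1)) * P)
            + P * (P * (P * δ * P ^ (5 * L + 1)
              + P * P * (((k:ℝ) + 1) * P ^ (5 * k) * (((L:ℝ) + 1) * P ^ (11 * L + 6)) * δ)) * P)
          = (L:ℝ) * P ^ (11 * L + 6) * δ + P ^ (5 * L + 5) * δ
            + ((k:ℝ) + 1) * ((L:ℝ) + 1) * P ^ (5 * k + 5) * P ^ (11 * L + 6) * δ := by ring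
      rw [heq]
      have cA := hpow (5 * L + 5) (11 * L + 6) (by omega)
      have cB := hpone (5 * k + 5)
      have h1 : P ^ (5 * L + 5) * δ ≤ P ^ (11 * L + 6) * δ :=
        mul_le_mul_of_nonneg_right cA hδ0
      have h3 : ((L:ℝ) + 1) * (P ^ (11 * L + 6) * δ)
          ≤ ((L:ℝ) + 1) * P ^ (5 * k + 5) * (P ^ (11 * L + 6) * δ) :=
        mul_le_mul_of_nonneg_right
          (le_mul_of_one_le_right (by positivity) cB) (mul_nonneg (hppos _) hδ0)
      nlinarith [h1, h3]
  have hEG' : ∀ m, 1 ≤ m → m ≤ L →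
      ‖GSG m - G m‖ ≤ ((L:ℝ) + 1) ^ 2 * P ^ (16 * L + 6) * δ := by
    intro m h1 h2
    have hk := hEG (L - m) (by omega)
    have he : L - (L - m) = m := by omega
    rw [he] at hk
    refine hk.trans ?_
    have hc : ((L - m : ℕ):ℝ) + 1 ≤ (L:ℝ) + 1 := by
      have : ((L - m : ℕ):ℝ) ≤ (L:ℝ) := Nat.cast_le.2 (by omega)
      linarith
    have c2 : P ^ (5 * (L - m)) ≤ P ^ (5 * L) := hpow _ _ (by omega)
    calc ((↑(L - m) : ℝ) + 1) * P ^ (5 * (L - m)) * (((L:ℝ) + 1) * P ^ (11 * L + 6)) * δ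
        ≤ (((L:ℝ) + 1) * P ^ (5 * L)) * (((L:ℝ) + 1) * P ^ (11 * L + 6)) * δ := by
          refine mul_le_mul_of_nonneg_right (mul_le_mul_of_nonneg_right ?_
            (mul_nonneg (by positivity) (hppos _))) hδ0
          exact mul2_le hc c2 (by positivity) (hppos _)
      _ = ((L:ℝ) + 1) ^ 2 * P ^ (16 * L + 6) * δ := by ring
  -- final assembly
  intro l hl
  rw [← hδdef]
  have hl0 : (0:ℝ) ≤ (l:ℝ) := Nat.cast_nonneg l
  have hlL' : (l:ℝ) ≤ (L:ℝ) := Nat.cast_le.2 (le_of_lt hl)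
  have hHSl : ‖gcnH ASG X W σ l‖ ≤ P ^ (5 * l + 1) := hHb ASG hASG l (by omega)
  have hHl : ‖gcnH A X W σ l‖ ≤ P ^ (5 * l + 1) := hHb A hA l (by omega)
  have hHdl := (hD l (by omega)).2
  have hGSGl1 : ‖GSG (l + 1)‖ ≤ P ^ (5 * L + 1) := (hGn' (l + 1) (by omega) (by omega)).2
  have hEGl1 : ‖GSG (l + 1) - G (l + 1)‖ ≤ ((L:ℝ) + 1) ^ 2 * P ^ (16 * L + 6) * δ :=
    hEG' (l + 1) (by omega) (by omega)
  have h1 : ‖ASG * gcnH ASG X W σ l - A * gcnH A X W σ l‖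
      ≤ P * δ * P ^ (5 * l + 1) + P * P * ((l:ℝ) * P ^ (6 * l + 1) * δ) := by
    rw [mul_sub_decomp]
    refine (norm_add_le _ _).trans (add_le_add
      ((mnorm_mul_le _ _).trans ?_) ((mnorm_mul_le _ _).trans ?_))
    · exact mul3_le hnP hδdef.ge hHSl hn0 (norm_nonneg _) (norm_nonneg _)
    · exact mul3_le hnP hAP hHdl hn0 (norm_nonneg _) (norm_nonneg _)
  have hAH : ‖A * gcnH A X W σ l‖ ≤ P * P * P ^ (5 * l + 1) :=
    (mnorm_mul_le _ _).trans (mul3_le hnP hAP hHl hn0 (norm_nonneg _) (norm_nonneg _))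
  have hMeq : (ASG * gcnH ASG X W σ l)ᵀ * GSG (l + 1)
        - (A * gcnH A X W σ l)ᵀ * G (l + 1)
      = (ASG * gcnH ASG X W σ l - A * gcnH A X W σ l)ᵀ * GSG (l + 1)
        + (A * gcnH A X W σ l)ᵀ * (GSG (l + 1) - G (l + 1)) := by
    rw [mul_sub_decomp, Matrix.transpose_sub]
  calc ‖(ASG * gcnH ASG X W σ l)ᵀ * GSG (l + 1)
        - (A * gcnH A X W σ l)ᵀ * G (l + 1)‖
      = ‖(ASG * gcnH ASG X W σ l - A * gcnH A X W σ l)ᵀ * GSG (l + 1)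
        + (A * gcnH A X W σ l)ᵀ * (GSG (l + 1) - G (l + 1))‖ := by rw [hMeq]
    _ ≤ ‖(ASG * gcnH ASG X W σ l - A * gcnH A X W σ l)ᵀ * GSG (l + 1)‖
        + ‖(A * gcnH A X W σ l)ᵀ * (GSG (l + 1) - G (l + 1))‖ := norm_add_le _ _
    _ ≤ (n:ℝ) * ‖(ASG * gcnH ASG X W σ l - A * gcnH A X W σ l)ᵀ‖ * ‖GSG (l + 1)‖
        + (n:ℝ) * ‖(A * gcnH A X W σ l)ᵀ‖ * ‖GSG (l + 1) - G (l + 1)‖ :=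
        add_le_add (mnorm_mul_le _ _) (mnorm_mul_le _ _)
    _ = (n:ℝ) * ‖ASG * gcnH ASG X W σ l - A * gcnH A X W σ l‖ * ‖GSG (l + 1)‖
        + (n:ℝ) * ‖A * gcnH A X W σ l‖ * ‖GSG (l + 1) - G (l + 1)‖ := by
        rw [mnorm_transpose, mnorm_transpose]
    _ ≤ P * (P * δ * P ^ (5 * l + 1) + P * P * ((l:ℝ) * P ^ (6 * l + 1) * δ))
          * P ^ (5 * L + 1)
        + P * (P * P * P ^ (5 * l + 1)) * (((L:ℝ) + 1) ^ 2 * P ^ (16 * L + 6) * δ) :=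
        add_le_add (mul3_le hnP h1 hGSGl1 hn0 (norm_nonneg _) (norm_nonneg _))
          (mul3_le hnP hAH hEGl1 hn0 (norm_nonneg _) (norm_nonneg _))
    _ ≤ 2 * ((L:ℝ) + 1) ^ 2 * P ^ (21 * L + 10) * δ := by
        have heq : P * (P * δ * P ^ (5 * l + 1) + P * P * ((l:ℝ) * P ^ (6 * l + 1) * δ))
              * P ^ (5 * L + 1)
            + P * (P * P * P ^ (5 * l + 1)) * (((L:ℝ) + 1) ^ 2 * P ^ (16 * L + 6) * δ)
            = P ^ (5 * l + 5 * L + 4) * δ + (l:ℝ) * P ^ (6 * l + 5 * L + 5) * δ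
              + ((L:ℝ) + 1) ^ 2 * P ^ (5 * l + 16 * L + 10) * δ := by ring
        rw [heq]
        have c1 := hpow (5 * l + 5 * L + 4) (21 * L + 10) (by omega)
        have c2 := hpow (6 * l + 5 * L + 5) (21 * L + 10) (by omega)
        have c3 := hpow (5 * l + 16 * L + 10) (21 * L + 10) (by omega)
        have hq : (0:ℝ) ≤ ((L:ℝ) + 1) ^ 2 - ((l:ℝ) + 1) := by nlinarith
        nlinarith [mul_le_mul_of_nonneg_right c1 hδ0,
          mul_le_mul_of_nonneg_right (mul_le_mul_of_nonneg_left c2 hl0) hδ0,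
          mul_le_mul_of_nonneg_right (mul_le_mul_of_nonneg_left c3
            (by positivity : (0:ℝ) ≤ ((L:ℝ) + 1) ^ 2)) hδ0,
          mul_nonneg (mul_nonneg hq (hppos (21 * L + 10))) hδ0]
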